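/- Let L be a finite-dimensional nilpotent Lie algebra with dim L² = 1. Let H/L² be a vector-space complement of Z(L)/L² in L/L², viewing H as a subalgebra of L containing L². Then H is a Heisenberg algebra, i.e., H² = Z(H) = L² has dimension 1. -/

import Mathlib

open Module

instance Prod.instLieRingBracket (L M : Type*) [LieRing L] [LieRing M] :
    Bracket (L × M) (L × M) :=
  ⟨fun x y => (⁅x.1, y.1⁆, ⁅x.2, y.2⁆)⟩

/-- Direct sum (product) of two Lie rings. -/
instance Prod.instLieRing (L M : Type*) [LieRing L] [LieRing M] : LieRing (L × M) where
  add_lie x y z := by ext <;> simp [Bracket.bracket, add_lie]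
  lie_add x y z := by ext <;> simp [Bracket.bracket, lie_add]
  lie_self x := by ext <;> simp [Bracket.bracket]
  leibniz_lie x y z := by ext <;> simp [Bracket.bracket]

instance Prod.instLieAlgebra (k L M : Type*) [CommRing k] [LieRing L] [LieRing M]
    [LieAlgebra k L] [LieAlgebra k M] : LieAlgebra k (L × M) where
  lie_smul t x y := by ext <;> simp [Bracket.bracket, lie_smul]

section Schur
variable (k : Type*) [Field k] (L : Type*) [LieRing L] [LieAlgebra k L]

/-- The canonical free presentation map `FreeLieAlgebra k L → L`. -/
noncomputable def presPi : FreeLieAlgebra k L →ₗ⁅k⁆ L := FreeLieAlgebra.lift k id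

/-- `R ∩ F²` for the canonical free presentation `0 → R → F → L → 0`. -/
noncomputable def multNum : LieIdeal k (FreeLieAlgebra k L) :=
  (presPi k L).ker ⊓ ⁅(⊤ : LieIdeal k (FreeLieAlgebra k L)), (⊤ : LieIdeal k (FreeLieAlgebra k L))⁆

/-- `[R, F]` for the canonical free presentation. -/
noncomputable def multDen : LieIdeal k (FreeLieAlgebra k L) :=
  ⁅(presPi k L).ker, (⊤ : LieIdeal k (FreeLieAlgebra k L))⁆

/-- The Schur multiplier `M(L) = (R ∩ F²)/[R,F]`, as a Lie algebra (it is abelian). -/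
noncomputable def schurMultiplier :=
  (↥(multNum k L)) ⧸ (LieIdeal.comap ((multNum k L) : LieSubalgebra k (FreeLieAlgebra k L)).incl
    (multDen k L))

noncomputable instance : LieRing (schurMultiplier k L) := by unfold schurMultiplier; infer_instance
noncomputable instance : LieAlgebra k (schurMultiplier k L) := by
  unfold schurMultiplier; infer_instance
noncomputable instance : Module k (schurMultiplier k L) := by
  unfold schurMultiplier; infer_instance

/-- dim M(L). -/
noncomputable def schurMultDim : ℕ := Module.finrank k (schurMultiplier k L)

/-- The derived subalgebra `L² = [L,L]` as an ideal. -/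
noncomputable def derivedIdeal : LieIdeal k L := ⁅(⊤ : LieIdeal k L), (⊤ : LieIdeal k L)⁆

end Schur


theorem stmt14 (k : Type*) [Field k] (L : Type*) [LieRing L] [LieAlgebra k L]
    [FiniteDimensional k L] [LieRing.IsNilpotent L]
    (hm : finrank k ↥(derivedIdeal k L) = 1)
    (H : LieSubalgebra k L)
    (hL2H : (derivedIdeal k L).toSubmodule ≤ H.toSubmodule)
    (hinf : H.toSubmodule ⊓ (LieAlgebra.center k L).toSubmodule =
      (derivedIdeal k L).toSubmodule)
    (hsup : H.toSubmodule ⊔ (LieAlgebra.center k L).toSubmodule = ⊤) :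
    derivedIdeal k ↥H = LieAlgebra.center k ↥H ∧
    (LieSubmodule.toSubmodule (derivedIdeal k ↥H)).map H.toSubmodule.subtype =
      (derivedIdeal k L).toSubmodule ∧
    finrank k ↥(derivedIdeal k ↥H) = 1 := by
  -- L² ≤ Z(L)
  have hDZ : (derivedIdeal k L).toSubmodule ≤ (LieAlgebra.center k L).toSubmodule := by
    rw [← hinf]; exact inf_le_right
  have hcen : ∀ c : L, c ∈ LieAlgebra.center k L → ∀ x : L, ⁅x, c⁆ = 0 := fun c hc x =>
    (LieModule.mem_maxTrivSubmodule k L L c).mp hc x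
  -- key: map of H² = L²
  have hmap : (LieSubmodule.toSubmodule (derivedIdeal k ↑H)).map H.toSubmodule.subtype =
      (derivedIdeal k L).toSubmodule := by
    unfold derivedIdeal
    rw [LieSubmodule.lieIdeal_oper_eq_linear_span', LieSubmodule.lieIdeal_oper_eq_linear_span',
      Submodule.map_span]
    apply le_antisymm
    · rw [Submodule.span_le]
      rintro _ ⟨m, ⟨x, -, y, -, rfl⟩, rfl⟩
      exact Submodule.subset_span ⟨(x : L), trivial, (y : L), trivial, rfl⟩
    · rw [Submodule.span_le]
      rintro _ ⟨a, -, b, -, rfl⟩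
      obtain ⟨h, hh, c, hc, rfl⟩ := Submodule.mem_sup.mp
        (hsup ▸ Submodule.mem_top : a ∈ H.toSubmodule ⊔ (LieAlgebra.center k L).toSubmodule)
      obtain ⟨h', hh', c', hc', rfl⟩ := Submodule.mem_sup.mp
        (hsup ▸ Submodule.mem_top : b ∈ H.toSubmodule ⊔ (LieAlgebra.center k L).toSubmodule)
      have : ⁅h + c, h' + c'⁆ = ⁅h, h'⁆ := by
        have h1 : ⁅c, h' + c'⁆ = 0 := by
          rw [← lie_skew, hcen _ hc, neg_zero]
        have h2 : ⁅h, c'⁆ = 0 := hcen _ hc' h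
        rw [add_lie, h1, add_zero, lie_add, h2, add_zero]
      rw [this]
      apply Submodule.subset_span
      exact ⟨⁅(⟨h, hh⟩ : H), (⟨h', hh'⟩ : H)⁆, ⟨(⟨h, hh⟩ : H), trivial,
        (⟨h', hh'⟩ : H), trivial, rfl⟩, rfl⟩
  refine ⟨?_, hmap, ?_⟩
  · -- derivedIdeal H = center H
    ext z
    constructor
    · intro hz
      rw [LieModule.mem_maxTrivSubmodule]
      intro x
      have hzL : (z : L) ∈ (derivedIdeal k L).toSubmodule := by
        rw [← hmap]; exact ⟨z, hz, rfl⟩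
      have : ((⁅x, z⁆ : H) : L) = 0 := by
        rw [LieSubalgebra.coe_bracket]
        exact hcen _ (hDZ hzL) _
      exact Subtype.ext this
    · intro hz
      have hzZ : (z : L) ∈ LieAlgebra.center k L := by
        rw [LieModule.mem_maxTrivSubmodule]
        intro l
        obtain ⟨h, hh, c, hc, rfl⟩ := Submodule.mem_sup.mp
          (hsup ▸ Submodule.mem_top : l ∈ H.toSubmodule ⊔ (LieAlgebra.center k L).toSubmodule)
        have h1 : ⁅h, (z : L)⁆ = 0 := by
          have := (LieModule.mem_maxTrivSubmodule k H H z).mp hz ⟨h, hh⟩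
          have := congrArg (Subtype.val) this
          rwa [LieSubalgebra.coe_bracket] at this
        have h2 : ⁅c, (z : L)⁆ = 0 := by rw [← lie_skew, hcen _ hc, neg_zero]
        rw [add_lie, h1, h2, add_zero]
      have : (z : L) ∈ (derivedIdeal k L).toSubmodule := by
        rw [← hinf]; exact ⟨z.2, hzZ⟩
      rw [← hmap] at this
      obtain ⟨w, hw, hwz⟩ := this
      have : w = z := Subtype.ext hwz
      rwa [← this]
  · -- finrank
    have := (Submodule.equivMapOfInjective H.toSubmodule.subtype
      (Submodule.injective_subtype _) (LieSubmodule.toSubmodule (derivedIdeal k ↑H))).finrank_eq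
    rw [hmap] at this
    exact this.trans hm
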